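/- Let d ≥ 1 and let S be the orthogonal projection onto the symmetric subspace of ℂ^d ⊗ ℂ^d (i.e., S = (I + V)/2 where V is the swap operator). Define Φ(ρ) = (2/(d+1)) · S (ρ ⊗ I_d) S for ρ ∈ M_d(ℂ). Then Φ is a quantum channel (completely positive and trace preserving), and for every unit vector |ψ⟩ ∈ ℂ^d it holds that ⟨ψ ⊗ ψ| Φ(|ψ⟩⟨ψ|) |ψ ⊗ ψ⟩ = 2/(d+1). In particular, every d-dimensional quantum money scheme admits a simple counterfeiting attack succeeding with probability at least 2/(d+1). -/

import Mathlib

open Matrix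
open scoped Kronecker

/-- The swap operator `V` on `ℂ^d ⊗ ℂ^d`, acting by `V(|x⟩⊗|y⟩) = |y⟩⊗|x⟩`. -/
def swapOp (d : ℕ) : Matrix (Fin d × Fin d) (Fin d × Fin d) ℂ :=
  Matrix.of fun p q => if p.1 = q.2 ∧ p.2 = q.1 then 1 else 0

/-- The orthogonal projection `S = (I + V)/2` onto the symmetric subspace of
`ℂ^d ⊗ ℂ^d`. -/
noncomputable def symProj (d : ℕ) : Matrix (Fin d × Fin d) (Fin d × Fin d) ℂ :=
  (2 : ℂ)⁻¹ • (1 + swapOp d)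

/-- Werner's symmetric cloning channel `Φ(ρ) = (2/(d+1)) S (ρ ⊗ I) S`. -/
noncomputable def werner (d : ℕ) (ρ : Matrix (Fin d) (Fin d) ℂ) :
    Matrix (Fin d × Fin d) (Fin d × Fin d) ℂ :=
  (2 / (d + 1) : ℂ) • (symProj d * (ρ ⊗ₖ (1 : Matrix (Fin d) (Fin d) ℂ)) * symProj d)

/-- Tensor product `ψ ⊗ φ` of two vectors in `ℂ^d`. -/
def tensd {d : ℕ} (ψ φ : Fin d → ℂ) : Fin d × Fin d → ℂ := fun p => ψ p.1 * φ p.2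

namespace WernerAux

def B (d : ℕ) (i : Fin d) : Matrix (Fin d × Fin d) (Fin d) ℂ :=
  Matrix.of fun p z => if p.1 = z ∧ p.2 = i then 1 else 0

lemma swapOp_mul_self (d : ℕ) : swapOp d * swapOp d = 1 := by
  ext p q
  simp only [mul_apply, swapOp, of_apply, one_apply]
  rw [Finset.sum_eq_single (p.2, p.1)]
  · by_cases h : p = q
    · subst h; simp
    · rw [if_pos ⟨rfl, rfl⟩, one_mul, if_neg h, if_neg]
      rintro ⟨h1, h2⟩
      exact h (Prod.ext_iff.mpr ⟨h2, h1⟩)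
  · intro r _ hr
    rw [if_neg, zero_mul]
    rintro ⟨h1, h2⟩
    exact hr (Prod.ext_iff.mpr ⟨h2.symm, h1.symm⟩)
  · simp

lemma swapOp_conjTranspose (d : ℕ) : (swapOp d)ᴴ = swapOp d := by
  ext p q
  simp only [conjTranspose_apply, swapOp, of_apply]
  by_cases h : q.1 = p.2 ∧ q.2 = p.1
  · rw [if_pos h, if_pos ⟨h.2.symm, h.1.symm⟩, star_one]
  · rw [if_neg h, if_neg, star_zero]
    tauto

lemma symProj_conjTranspose (d : ℕ) : (symProj d)ᴴ = symProj d := by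
  rw [symProj, conjTranspose_smul, conjTranspose_add, conjTranspose_one,
    swapOp_conjTranspose]
  congr 1
  simp

lemma symProj_mul_self (d : ℕ) : symProj d * symProj d = symProj d := by
  simp only [symProj, smul_mul_smul_comm, add_mul, mul_add, one_mul, mul_one,
    swapOp_mul_self]
  have h : (1 : Matrix (Fin d × Fin d) (Fin d × Fin d) ℂ) + swapOp d + (swapOp d + 1)
      = (2 : ℂ) • (1 + swapOp d) := by
    rw [two_smul]; abel
  rw [h, smul_smul]
  norm_num

lemma B_mul_mul (d : ℕ) (i : Fin d) (ρ : Matrix (Fin d) (Fin d) ℂ) :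
    B d i * ρ * (B d i)ᴴ
      = Matrix.of (fun p q => if p.2 = i ∧ q.2 = i then ρ p.1 q.1 else 0) := by
  ext p q
  simp only [mul_apply, conjTranspose_apply, B, of_apply]
  rw [Finset.sum_eq_single q.1]
  · rw [Finset.sum_eq_single p.1]
    · by_cases h1 : p.2 = i <;> by_cases h2 : q.2 = i <;> simp [h1, h2]
    · intro z _ hz
      rw [if_neg (fun hc => hz hc.1.symm), zero_mul]
    · simp
  · intro w _ hw
    simp [Ne.symm hw]
  · simp

lemma sum_B_mul (d : ℕ) (ρ : Matrix (Fin d) (Fin d) ℂ) :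
    ∑ i, B d i * ρ * (B d i)ᴴ = ρ ⊗ₖ (1 : Matrix (Fin d) (Fin d) ℂ) := by
  ext p q
  rw [Matrix.sum_apply]
  simp only [B_mul_mul, of_apply, kroneckerMap_apply, one_apply]
  rw [Finset.sum_eq_single p.2]
  · by_cases h : p.2 = q.2
    · simp [h.symm, mul_comm]
    · simp [Ne.symm h, h]
  · intro i _ hi
    simp [Ne.symm hi]
  · simp

lemma symProj_mul_B (d : ℕ) (i : Fin d) : symProj d * B d i
    = Matrix.of (fun p z => (2 : ℂ)⁻¹ *
        ((if p = (z, i) then 1 else 0) + if p = (i, z) then 1 else 0)) := by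
  have h2 : ∀ (p : Fin d × Fin d) (z : Fin d),
      (swapOp d * B d i) p z = if p = ((i : Fin d), z) then 1 else 0 := by
    intro p z
    rw [mul_apply, Finset.sum_eq_single (p.2, p.1)]
    · have hc : (p.2 = z ∧ p.1 = i) ↔ p = ((i : Fin d), z) := by
        constructor
        · rintro ⟨a, b⟩; exact Prod.ext_iff.mpr ⟨b, a⟩
        · rintro rfl; exact ⟨rfl, rfl⟩
      simp [swapOp, B, hc]
    · intro r _ hr
      simp only [swapOp, B, of_apply]
      rw [if_neg, zero_mul]
      rintro ⟨a, b⟩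
      exact hr (Prod.ext_iff.mpr ⟨b.symm, a.symm⟩)
    · simp
  ext p z
  rw [symProj, Matrix.smul_mul, Matrix.smul_apply, Matrix.add_mul, Matrix.one_mul,
    Matrix.add_apply, h2]
  simp only [B, of_apply, smul_eq_mul]
  congr 2
  by_cases h : p = (z, i)
  · rw [if_pos h, if_pos]
    exact Prod.ext_iff.mp h
  · rw [if_neg h, if_neg]
    rintro ⟨a, b⟩
    exact h (Prod.ext_iff.mpr ⟨a, b⟩)

lemma sum_B_symProj_B (d : ℕ) :
    ∑ i, (B d i)ᴴ * (symProj d * B d i) = (((d : ℂ) + 1) / 2) • 1 := by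
  ext z w
  rw [Matrix.sum_apply]
  have key : ∀ i : Fin d, ((B d i)ᴴ * (symProj d * B d i)) z w
      = (2 : ℂ)⁻¹ * ((if z = w then 1 else 0) + if z = i ∧ i = w then 1 else 0) := by
    intro i
    rw [symProj_mul_B, mul_apply]
    simp only [conjTranspose_apply, B, of_apply]
    rw [Finset.sum_eq_single ((z : Fin d), i)]
    · rw [if_pos ⟨rfl, rfl⟩, star_one, one_mul]
      congr 2 <;> simp [Prod.ext_iff]
    · intro r _ hr
      rw [if_neg, star_zero, zero_mul]
      rintro ⟨a, b⟩
      exact hr (Prod.ext_iff.mpr ⟨a, b⟩)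
    · simp
  have hs : (∑ x : Fin d, if z = x ∧ x = w then (1 : ℂ) else 0)
      = if z = w then 1 else 0 := by
    rw [Finset.sum_eq_single z]
    · by_cases h : z = w <;> simp [h]
    · intro x _ hx
      rw [if_neg (fun hc => hx hc.1.symm)]
    · simp
  rw [Finset.sum_congr rfl (fun i _ => key i), ← Finset.mul_sum,
    Finset.sum_add_distrib, Finset.sum_const, hs]
  simp only [Matrix.smul_apply, one_apply, smul_eq_mul, Finset.card_univ, Fintype.card_fin,
    nsmul_eq_mul]
  by_cases h : z = w <;> simp [h] <;> ring

noncomputable def s (d : ℕ) : ℂ := Complex.ofReal (Real.sqrt (2 / (d + 1)))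

lemma s_mul_s (d : ℕ) : s d * s d = 2 / ((d : ℂ) + 1) := by
  unfold s
  rw [← Complex.ofReal_mul, Real.mul_self_sqrt (by positivity)]
  push_cast
  ring

lemma s_star (d : ℕ) : star (s d) = s d := by
  simp [s, Complex.star_def]

lemma cast_ne (d : ℕ) : ((d : ℂ) + 1) ≠ 0 := by
  have : ((d + 1 : ℕ) : ℂ) ≠ 0 := Nat.cast_ne_zero.mpr (Nat.succ_ne_zero d)
  push_cast at this
  exact this

noncomputable def A (d : ℕ) (i : Fin d) : Matrix (Fin d × Fin d) (Fin d) ℂ :=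
  s d • (symProj d * B d i)

lemma kraus_sum (d : ℕ) : ∑ i, (A d i)ᴴ * A d i = 1 := by
  have step : ∀ i : Fin d, (A d i)ᴴ * A d i
      = (s d * s d) • ((B d i)ᴴ * (symProj d * B d i)) := by
    intro i
    rw [A, conjTranspose_smul, s_star, Matrix.smul_mul, Matrix.mul_smul, smul_smul]
    congr 1
    rw [conjTranspose_mul, symProj_conjTranspose, Matrix.mul_assoc,
      ← Matrix.mul_assoc (symProj d), symProj_mul_self]
  rw [Finset.sum_congr rfl (fun i _ => step i), ← Finset.smul_sum, sum_B_symProj_B,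
    smul_smul, s_mul_s]
  have : 2 / ((d : ℂ) + 1) * (((d : ℂ) + 1) / 2) = 1 := by
    field_simp [cast_ne d]
  rw [this, one_smul]

lemma kraus_apply (d : ℕ) (ρ : Matrix (Fin d) (Fin d) ℂ) :
    werner d ρ = ∑ i, A d i * ρ * (A d i)ᴴ := by
  have step : ∀ i : Fin d, A d i * ρ * (A d i)ᴴ
      = (s d * s d) • (symProj d * (B d i * ρ * (B d i)ᴴ) * symProj d) := by
    intro i
    rw [A, conjTranspose_smul, s_star, Matrix.smul_mul, Matrix.smul_mul,
      Matrix.mul_smul, smul_smul, conjTranspose_mul, symProj_conjTranspose]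
    congr 1
    simp only [Matrix.mul_assoc]
  rw [Finset.sum_congr rfl (fun i _ => step i), ← Finset.smul_sum, werner, s_mul_s]
  congr 1
  rw [← Finset.sum_mul, ← Finset.mul_sum, sum_B_mul]

lemma swapOp_mulVec {d : ℕ} (a b : Fin d → ℂ) :
    (swapOp d) *ᵥ (tensd a b) = tensd b a := by
  ext p
  simp only [mulVec, dotProduct, swapOp, of_apply, tensd]
  rw [Finset.sum_eq_single (p.2, p.1)]
  · rw [if_pos ⟨rfl, rfl⟩, one_mul, mul_comm]
  · intro r _ hr
    rw [if_neg, zero_mul]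
    rintro ⟨h1, h2⟩
    exact hr (Prod.ext_iff.mpr ⟨h2.symm, h1.symm⟩)
  · simp

lemma symProj_mulVec {d : ℕ} (a : Fin d → ℂ) :
    (symProj d) *ᵥ (tensd a a) = tensd a a := by
  rw [symProj, smul_mulVec, add_mulVec, one_mulVec, swapOp_mulVec, smul_add]
  rw [← two_smul ℂ, smul_smul]
  norm_num

lemma kron_one_mulVec {d : ℕ} (ρ : Matrix (Fin d) (Fin d) ℂ) (a b : Fin d → ℂ) :
    (ρ ⊗ₖ (1 : Matrix (Fin d) (Fin d) ℂ)) *ᵥ (tensd a b) = tensd (ρ *ᵥ a) b := by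
  ext p
  simp only [mulVec, dotProduct, kroneckerMap_apply, one_apply, tensd,
    Fintype.sum_prod_type]
  rw [Finset.sum_comm, Finset.sum_eq_single p.2]
  · rw [Finset.sum_mul]
    apply Finset.sum_congr rfl
    intro x _
    rw [if_pos rfl, mul_one]
    ring
  · intro w _ hw
    rw [Finset.sum_eq_zero]
    intro x _
    simp [Ne.symm hw]
  · simp

lemma vecMulVec_mulVec' {d : ℕ} (ψ v w : Fin d → ℂ) :
    (vecMulVec ψ v) *ᵥ w = (v ⬝ᵥ w) • ψ := by
  ext x
  simp only [mulVec, dotProduct, vecMulVec_apply, Pi.smul_apply, smul_eq_mul,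
    Finset.sum_mul, Finset.mul_sum]
  apply Finset.sum_congr rfl
  intro y _
  ring

lemma star_tensd {d : ℕ} (a b : Fin d → ℂ) :
    star (tensd a b) = tensd (star a) (star b) := by
  ext p
  simp [tensd]

lemma tensd_dotProduct {d : ℕ} (a b x y : Fin d → ℂ) :
    tensd a b ⬝ᵥ tensd x y = (a ⬝ᵥ x) * (b ⬝ᵥ y) := by
  rw [dotProduct, dotProduct, dotProduct, Finset.sum_mul_sum, Fintype.sum_prod_type]
  apply Finset.sum_congr rfl
  intro p _
  apply Finset.sum_congr rfl
  intro q _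
  simp only [tensd]
  ring

lemma fidelity (d : ℕ) (ψ : Fin d → ℂ) (hψ : star ψ ⬝ᵥ ψ = 1) :
    star (tensd ψ ψ) ⬝ᵥ (werner d (vecMulVec ψ (star ψ))) *ᵥ (tensd ψ ψ)
      = (2 / ((d : ℂ) + 1)) := by
  rw [werner, smul_mulVec, dotProduct_smul]
  rw [← mulVec_mulVec, ← mulVec_mulVec, symProj_mulVec, kron_one_mulVec,
    vecMulVec_mulVec', hψ, one_smul, symProj_mulVec, star_tensd, tensd_dotProduct, hψ]
  simp

lemma sandwich (d : ℕ) (M : Matrix (Fin d × Fin d) (Fin d) ℂ) (ψ : Fin d → ℂ)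
    (φ : Fin d × Fin d → ℂ) :
    star φ ⬝ᵥ (M * vecMulVec ψ (star ψ) * Mᴴ) *ᵥ φ
      = (star φ ⬝ᵥ M *ᵥ ψ) * star (star φ ⬝ᵥ M *ᵥ ψ) := by
  rw [← mulVec_mulVec, ← mulVec_mulVec, vecMulVec_mulVec', mulVec_smul,
    dotProduct_smul, smul_eq_mul]
  have h : star ψ ⬝ᵥ Mᴴ *ᵥ φ = star (star φ ⬝ᵥ M *ᵥ ψ) := by
    simp only [dotProduct, mulVec, conjTranspose_apply, star_sum, star_mul',
      star_star, Pi.star_apply, Finset.mul_sum, Finset.sum_mul]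
    rw [Finset.sum_comm]
    apply Finset.sum_congr rfl
    intro x _
    apply Finset.sum_congr rfl
    intro y _
    ring
  rw [h]
  ring

lemma sum_mulVec' {ι m n : Type*} [Fintype ι] [Fintype n]
    (M : ι → Matrix m n ℂ) (v : n → ℂ) :
    (∑ i, M i) *ᵥ v = ∑ i, (M i) *ᵥ v := by
  ext x
  simp only [mulVec, dotProduct, Matrix.sum_apply, Finset.sum_apply, Finset.sum_mul]
  rw [Finset.sum_comm]

lemma dotProduct_sum' {ι n : Type*} [Fintype ι] [Fintype n]
    (x : n → ℂ) (v : ι → n → ℂ) :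
    x ⬝ᵥ (∑ i, v i) = ∑ i, x ⬝ᵥ v i := by
  simp only [dotProduct, Finset.sum_apply, Finset.mul_sum]
  rw [Finset.sum_comm]

end WernerAux

/-- Werner's cloning map `Φ(ρ) = (2/(d+1)) S (ρ ⊗ I) S` is a quantum channel
(it admits a Kraus decomposition with `∑ i, (A i)ᴴ * A i = 1`), and it clones
every unit vector `|ψ⟩ ∈ ℂ^d` with probability
`⟨ψ ⊗ ψ| Φ(|ψ⟩⟨ψ|) |ψ ⊗ ψ⟩ = 2/(d+1)`.  In particular, every `d`-dimensional
quantum money scheme admits a simple counterfeiting attack succeeding with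
probability at least `2/(d+1)`. -/
theorem werner_cloner (d : ℕ) (hd : 1 ≤ d) :
    (∃ (m : ℕ) (A : Fin m → Matrix (Fin d × Fin d) (Fin d) ℂ),
      (∑ i, (A i)ᴴ * A i = 1) ∧
      ∀ ρ : Matrix (Fin d) (Fin d) ℂ, werner d ρ = ∑ i, A i * ρ * (A i)ᴴ) ∧
    (∀ ψ : Fin d → ℂ, star ψ ⬝ᵥ ψ = 1 →
      star (tensd ψ ψ) ⬝ᵥ (werner d (vecMulVec ψ (star ψ))).mulVec (tensd ψ ψ)
        = (2 / (d + 1) : ℂ)) ∧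
    (∀ (N : ℕ) (p : Fin N → ℝ) (ψ : Fin N → (Fin d → ℂ)),
      (∀ k, 0 ≤ p k) → (∑ k, p k = 1) → (∀ k, star (ψ k) ⬝ᵥ ψ k = 1) →
      ∃ (m : ℕ) (A : Fin m → Matrix (Fin d × Fin d) (Fin d) ℂ),
        (∑ i, (A i)ᴴ * A i = 1) ∧
        (2 / (d + 1) : ℝ) ≤ ∑ k, p k * ∑ i,
          Complex.normSq (star (tensd (ψ k) (ψ k)) ⬝ᵥ (A i).mulVec (ψ k))) := by
  refine ⟨⟨d, WernerAux.A d, WernerAux.kraus_sum d, WernerAux.kraus_apply d⟩,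
    fun ψ hψ => WernerAux.fidelity d ψ hψ, ?_⟩
  intro N p ψ hp hsum hψ
  refine ⟨d, WernerAux.A d, WernerAux.kraus_sum d, ?_⟩
  have key : ∀ k, ∑ i, Complex.normSq
      (star (tensd (ψ k) (ψ k)) ⬝ᵥ (WernerAux.A d i) *ᵥ (ψ k)) = 2 / (d + 1 : ℝ) := by
    intro k
    have hz : (∑ i, (star (tensd (ψ k) (ψ k)) ⬝ᵥ (WernerAux.A d i) *ᵥ (ψ k)) *
        star (star (tensd (ψ k) (ψ k)) ⬝ᵥ (WernerAux.A d i) *ᵥ (ψ k)))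
        = (2 / ((d : ℂ) + 1)) := by
      have h1 := congrArg (fun M => star (tensd (ψ k) (ψ k)) ⬝ᵥ M *ᵥ (tensd (ψ k) (ψ k)))
        (WernerAux.kraus_apply d (vecMulVec (ψ k) (star (ψ k))))
      rw [WernerAux.fidelity d (ψ k) (hψ k)] at h1
      rw [h1, WernerAux.sum_mulVec', WernerAux.dotProduct_sum']
      exact Finset.sum_congr rfl fun i _ =>
        (WernerAux.sandwich d (WernerAux.A d i) (ψ k) (tensd (ψ k) (ψ k))).symm
    have h2 : ((∑ i, Complex.normSq
        (star (tensd (ψ k) (ψ k)) ⬝ᵥ (WernerAux.A d i) *ᵥ (ψ k)) : ℝ) : ℂ)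
        = ((2 / (d + 1 : ℝ) : ℝ) : ℂ) := by
      push_cast
      rw [← hz]
      exact Finset.sum_congr rfl fun i _ => (Complex.mul_conj _).symm
    exact_mod_cast h2
  calc (2 / (d + 1) : ℝ) = ∑ k, p k * (2 / (d + 1) : ℝ) := by
        rw [← Finset.sum_mul, hsum, one_mul]
    _ ≤ ∑ k, p k * ∑ i, Complex.normSq
        (star (tensd (ψ k) (ψ k)) ⬝ᵥ (WernerAux.A d i) *ᵥ (ψ k)) :=
        le_of_eq (Finset.sum_congr rfl fun k _ => by rw [key k])
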